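/- Let 0 → M → G₁ → G₂ → G → 1 be an exact sequence where G₁ → G₂ is a crossed module of groups with kernel the abelian group M, G₂ has nilpotency class c₂, and the action of G₂ on M (through G) has length d. Then G₁ is nilpotent of class at most c₂ + d. -/

import Mathlib

/-- Iterated action-commutator subgroups `[ker k, _i G₂]` inside `G₁`, for an action
`η : G₂ →* MulAut G₁`. -/
def cmIter {G₁ G₂ : Type*} [Group G₁] [Group G₂] (k : G₁ →* G₂) (η : G₂ →* MulAut G₁) :
    ℕ → Subgroup G₁
  | 0 => k.ker
  | (i+1) => Subgroup.closure {x | ∃ g₂ : G₂, ∃ m ∈ cmIter k η i, x = η g₂ m * m⁻¹}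

lemma lcs_succ_comm {G : Type*} [Group G] (n : ℕ) :
    (⊤ : Subgroup G).lowerCentralSeries (n + 1) = ⁅(⊤ : Subgroup G).lowerCentralSeries n, (⊤ : Subgroup G)⁆ := by
  rw [Subgroup.lowerCentralSeries_succ]

lemma map_lcs_le {G₁ G₂ : Type*} [Group G₁] [Group G₂] (k : G₁ →* G₂) :
    ∀ n, ((⊤ : Subgroup G₁).lowerCentralSeries n).map k ≤ (⊤ : Subgroup G₂).lowerCentralSeries n := by
  intro n
  induction n with
  | zero => exact le_top
  | succ n ih =>
      rw [lcs_succ_comm, lcs_succ_comm, Subgroup.map_commutator]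
      exact Subgroup.commutator_mono ih le_top

/-- If `k : G₁ → G₂` is a crossed module of groups with abelian kernel `M = ker k`, `G₂` of
nilpotency class at most `c₂`, and the action of `G₂` on `M` of length at most `d`, then `G₁`
is nilpotent of class at most `c₂ + d`. -/
theorem stmt16 {G₁ G₂ : Type*} [Group G₁] [Group G₂] (k : G₁ →* G₂) (η : G₂ →* MulAut G₁)
    (hequiv : ∀ (g₂ : G₂) (g₁ : G₁), k (η g₂ g₁) = g₂ * k g₁ * g₂⁻¹)
    (hpeiffer : ∀ g₁ g₁' : G₁, η (k g₁) g₁' = g₁ * g₁' * g₁⁻¹)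
    (hab : ∀ a b : G₁, a ∈ k.ker → b ∈ k.ker → a * b = b * a)
    (c₂ d : ℕ)
    (hc : (⊤ : Subgroup G₂).lowerCentralSeries c₂ = ⊥)
    (hd : cmIter k η d = ⊥) :
    (⊤ : Subgroup G₁).lowerCentralSeries (c₂ + d) = ⊥ := by
  have key : ∀ i, (⊤ : Subgroup G₁).lowerCentralSeries (c₂ + i) ≤ cmIter k η i := by
    intro i
    induction i with
    | zero =>
        intro x hx
        simp only [Nat.add_zero] at hx
        show x ∈ k.ker
        have : k x ∈ (⊤ : Subgroup G₂).lowerCentralSeries c₂ := map_lcs_le k c₂ ⟨x, hx, rfl⟩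
        rw [hc] at this
        exact this
    | succ i ih =>
        rw [Nat.add_succ, lcs_succ_comm]
        rw [Subgroup.commutator_le]
        intro m hm g _
        have hgen : (η (k g)) m * m⁻¹ ∈ cmIter k η (i+1) :=
          Subgroup.subset_closure ⟨k g, m, ih hm, rfl⟩
        have := (cmIter k η (i+1)).inv_mem hgen
        have heq : ((η (k g)) m * m⁻¹)⁻¹ = m * g * m⁻¹ * g⁻¹ := by
          rw [hpeiffer]
          group
        rwa [heq] at this
  exact le_bot_iff.mp (hd ▸ key d)
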